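/- arXiv:1010.0629 — 2 statements merged into one kernel-verified Lean document; each statement's English description precedes it below -/
import Mathlib

section
/- Let (R_k)_{k≥1} be i.i.d. nonnegative random variables that are exponentially bounded (P(R_1 ≥ x) ≤ C e^{−γx} for all x ≥ 0, some C < ∞, γ > 0), and let N be a geometric random variable with parameter p ∈ (0,1] (P(N = n) = p(1−p)^{n−1}, n ≥ 1) independent of (R_k). Then the random sum S = R_1 + ⋯ + R_N is exponentially bounded: there exist C' < ∞ and γ' > 0 with P(S ≥ x) ≤ C' e^{−γ' x} for all x ≥ 0. -/
open MeasureTheory ProbabilityTheory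
open scoped ENNReal

lemma lintegral_exp_tail_bound {Ω : Type*} [MeasurableSpace Ω] (μ : Measure Ω)
    [IsProbabilityMeasure μ]
    (X : Ω → ℝ) (hX : Measurable X) (hX0 : ∀ ω, 0 ≤ X ω)
    (C γ : ℝ) (hC : 0 ≤ C)
    (hbd : ∀ x : ℝ, 0 ≤ x → μ {ω | x ≤ X ω} ≤ ENNReal.ofReal (C * Real.exp (-γ * x)))
    (δ t : ℝ) (hδ : 0 < δ) (ht : 0 < t) :
    ∫⁻ ω, ENNReal.ofReal (Real.exp (t * X ω)) ∂μ ≤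
      ENNReal.ofReal (Real.exp (t * δ)) +
        ENNReal.ofReal (C * Real.exp ((2 * t - γ) * δ)) *
          (1 - ENNReal.ofReal (Real.exp ((t - γ) * δ)))⁻¹ := by
  set F : ℕ → ℝ≥0∞ := fun j =>
    ENNReal.ofReal (Real.exp (t * ((j : ℝ) + 1) * δ)) * μ {ω | (j : ℝ) * δ ≤ X ω} with hF
  set g : ℕ → Ω → ℝ≥0∞ := fun j =>
    Set.indicator {ω | (j : ℝ) * δ ≤ X ω}
      (fun _ => ENNReal.ofReal (Real.exp (t * ((j : ℝ) + 1) * δ))) with hg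
  have hsets : ∀ j : ℕ, MeasurableSet {ω | (j : ℝ) * δ ≤ X ω} := fun j =>
    measurableSet_le measurable_const hX
  have hpt : ∀ ω, ENNReal.ofReal (Real.exp (t * X ω)) ≤ ∑' j, g j ω := by
    intro ω
    set j0 : ℕ := ⌊X ω / δ⌋₊ with hj0
    have hfl := Nat.floor_le (div_nonneg (hX0 ω) hδ.le)
    have h1 : (j0 : ℝ) * δ ≤ X ω := by
      have h : (j0 : ℝ) * δ ≤ (X ω / δ) * δ := by nlinarith
      calc (j0 : ℝ) * δ ≤ (X ω / δ) * δ := h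
        _ = X ω := div_mul_cancel₀ _ hδ.ne'
    have hfl2 := (Nat.lt_floor_add_one (X ω / δ)).le
    have h2 : X ω ≤ ((j0 : ℝ) + 1) * δ := by
      calc X ω = (X ω / δ) * δ := (div_mul_cancel₀ _ hδ.ne').symm
        _ ≤ ((j0 : ℝ) + 1) * δ := by nlinarith
    have hmem : ω ∈ {ω | (j0 : ℝ) * δ ≤ X ω} := h1
    have hle : ENNReal.ofReal (Real.exp (t * X ω)) ≤ g j0 ω := by
      rw [hg]
      simp only
      rw [Set.indicator_of_mem hmem]
      exact ENNReal.ofReal_le_ofReal (Real.exp_le_exp.2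
        (show t * X ω ≤ t * ((j0 : ℝ) + 1) * δ by nlinarith))
    exact hle.trans (ENNReal.le_tsum j0)
  have hsplit : (∑' j : ℕ, F j) = F 0 + ∑' j : ℕ, F (j + 1) :=
    tsum_eq_zero_add' ENNReal.summable
  calc ∫⁻ ω, ENNReal.ofReal (Real.exp (t * X ω)) ∂μ
      ≤ ∫⁻ ω, ∑' j, g j ω ∂μ := lintegral_mono hpt
    _ = ∑' j : ℕ, ∫⁻ ω, g j ω ∂μ :=
        lintegral_tsum fun j => (measurable_const.indicator (hsets j)).aemeasurable
    _ = ∑' j : ℕ, F j := tsum_congr fun j => lintegral_indicator_const (hsets j) _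
    _ = F 0 + ∑' j : ℕ, F (j + 1) := hsplit
    _ ≤ ENNReal.ofReal (Real.exp (t * δ)) +
        ∑' j : ℕ, ENNReal.ofReal (C * Real.exp ((2 * t - γ) * δ)) *
          (ENNReal.ofReal (Real.exp ((t - γ) * δ))) ^ j := by
        refine add_le_add ?_ (ENNReal.tsum_le_tsum fun j => ?_)
        · calc F 0 ≤ ENNReal.ofReal (Real.exp (t * (((0:ℕ) : ℝ) + 1) * δ)) * 1 :=
              mul_le_mul_right prob_le_one _
            _ = ENNReal.ofReal (Real.exp (t * δ)) := by rw [mul_one]; norm_num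
        · have hcast : (((j + 1 : ℕ)) : ℝ) = (j : ℝ) + 1 := by push_cast; ring
          have hμj : μ {ω | (((j + 1 : ℕ)) : ℝ) * δ ≤ X ω} ≤
              ENNReal.ofReal (C * Real.exp (-γ * (((j : ℝ) + 1) * δ))) := by
            rw [hcast]
            exact hbd (((j : ℝ) + 1) * δ) (by positivity)
          have hexpeq : Real.exp (t * (((j + 1 : ℕ) : ℝ) + 1) * δ) *
              (C * Real.exp (-γ * (((j : ℝ) + 1) * δ))) =
              (C * Real.exp ((2 * t - γ) * δ)) * Real.exp ((t - γ) * δ) ^ j := by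
            rw [hcast, ← Real.exp_nat_mul]
            rw [show Real.exp (t * ((j : ℝ) + 1 + 1) * δ) * (C * Real.exp (-γ * (((j : ℝ) + 1) * δ)))
                = C * Real.exp (t * ((j : ℝ) + 1 + 1) * δ + -γ * (((j : ℝ) + 1) * δ)) by
                rw [Real.exp_add]; ring]
            rw [show t * ((j : ℝ) + 1 + 1) * δ + -γ * (((j : ℝ) + 1) * δ)
                = (2 * t - γ) * δ + (j : ℝ) * ((t - γ) * δ) by ring]
            rw [Real.exp_add]; ring
          calc F (j + 1)
              ≤ ENNReal.ofReal (Real.exp (t * (((j + 1 : ℕ) : ℝ) + 1) * δ)) *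
                ENNReal.ofReal (C * Real.exp (-γ * (((j : ℝ) + 1) * δ))) :=
                mul_le_mul_right hμj _
            _ = ENNReal.ofReal (Real.exp (t * (((j + 1 : ℕ) : ℝ) + 1) * δ) *
                (C * Real.exp (-γ * (((j : ℝ) + 1) * δ)))) :=
                (ENNReal.ofReal_mul (Real.exp_pos _).le).symm
            _ = ENNReal.ofReal ((C * Real.exp ((2 * t - γ) * δ)) * Real.exp ((t - γ) * δ) ^ j) := by
                rw [hexpeq]
            _ = ENNReal.ofReal (C * Real.exp ((2 * t - γ) * δ)) *
                (ENNReal.ofReal (Real.exp ((t - γ) * δ))) ^ j := by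
                rw [ENNReal.ofReal_mul (by positivity), ENNReal.ofReal_pow (Real.exp_pos _).le]
    _ = ENNReal.ofReal (Real.exp (t * δ)) +
        ENNReal.ofReal (C * Real.exp ((2 * t - γ) * δ)) *
          (1 - ENNReal.ofReal (Real.exp ((t - γ) * δ)))⁻¹ := by
        rw [ENNReal.tsum_mul_left, ENNReal.tsum_geometric]


lemma exists_good_t (C γ p : ℝ) (hC : 1 ≤ C) (hγ : 0 < γ) (hp : 0 < p) (hp1 : p ≤ 1) :
    ∃ t δ : ℝ, 0 < t ∧ t < γ ∧ 0 < δ ∧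
      ENNReal.ofReal (Real.exp (t * δ)) +
        ENNReal.ofReal (C * Real.exp ((2 * t - γ) * δ)) *
          (1 - ENNReal.ofReal (Real.exp ((t - γ) * δ)))⁻¹ ≤ ENNReal.ofReal (1 + p / 2) := by
  have hApos : (0:ℝ) < 64 * (C + 1) / p := by positivity
  have hA : (128:ℝ) ≤ 64 * (C + 1) / p := by
    rw [le_div_iff₀ hp]; nlinarith
  have hlog : (4:ℝ) ≤ Real.log (64 * (C + 1) / p) := by
    have h128 : Real.log 128 ≤ Real.log (64 * (C + 1) / p) :=
      Real.log_le_log (by norm_num) hA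
    have h7 : Real.log 128 = 7 * Real.log 2 := by
      rw [show (128:ℝ) = 2 ^ (7:ℕ) by norm_num, Real.log_pow]; push_cast; ring
    nlinarith [Real.log_two_gt_d9]
  set δ : ℝ := Real.log (64 * (C + 1) / p) / γ with hδdef
  have hδpos : 0 < δ := div_pos (by linarith) hγ
  have hγδ : γ * δ = Real.log (64 * (C + 1) / p) := by
    rw [hδdef]; field_simp
  have hγδ4 : 4 ≤ γ * δ := by rw [hγδ]; exact hlog
  have hexpγδ : Real.exp (-(γ * δ)) = p / (64 * (C + 1)) := by
    rw [hγδ, Real.exp_neg, Real.exp_log hApos, inv_div]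
  set t : ℝ := min (γ / 2) (p / (12 * δ)) with htdef
  have ht0 : 0 < t := lt_min (by linarith) (div_pos hp (by positivity))
  have htγ2 : t ≤ γ / 2 := min_le_left _ _
  have htγ : t < γ := lt_of_le_of_lt htγ2 (by linarith)
  have htδ : t * δ ≤ p / 12 := by
    have h := min_le_right (γ / 2) (p / (12 * δ))
    have h2 : t * δ ≤ (p / (12 * δ)) * δ := by nlinarith
    calc t * δ ≤ (p / (12 * δ)) * δ := h2
      _ = p / 12 := by field_simp
  have htδ0 : 0 ≤ t * δ := by positivity
  have hexp_le : ∀ u : ℝ, 0 ≤ u → u < 1 → Real.exp u ≤ (1 - u)⁻¹ := by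
    intro u hu0 hu1
    have h1 : 1 - u ≤ Real.exp (-u) := by
      have := Real.add_one_le_exp (-u); linarith
    rw [Real.exp_neg u] at h1
    exact le_inv_of_le_inv₀ (by linarith) h1
  -- (i)
  have h1 : Real.exp (t * δ) ≤ 1 + p / 4 := by
    have hu1 : t * δ < 1 := by nlinarith
    have he := hexp_le (t * δ) htδ0 hu1
    have hpos : 0 < 1 - t * δ := by linarith
    have hinv : (1 - t * δ)⁻¹ ≤ 1 + p / 4 := by
      rw [inv_eq_one_div, div_le_iff₀ hpos]; nlinarith
    linarith
  -- (ii)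
  have h2 : Real.exp ((t - γ) * δ) ≤ 1 / 2 := by
    have harg : (t - γ) * δ ≤ -2 := by nlinarith
    have he : Real.exp ((t - γ) * δ) ≤ Real.exp (-2) := Real.exp_le_exp.2 harg
    have h3 : (2:ℝ) ≤ Real.exp 2 := by
      have := Real.add_one_le_exp (2:ℝ); linarith
    have : Real.exp (-2) ≤ 1 / 2 := by
      rw [Real.exp_neg]
      rw [inv_le_comm₀ (Real.exp_pos 2) (by norm_num)]
      calc (1/2 : ℝ)⁻¹ = 2 := by norm_num
        _ ≤ Real.exp 2 := h3
    linarith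
  -- (iii)
  have h3 : C * Real.exp ((2 * t - γ) * δ) ≤ p / 32 := by
    have hsplit : Real.exp ((2 * t - γ) * δ) =
        Real.exp (2 * (t * δ)) * Real.exp (-(γ * δ)) := by
      rw [← Real.exp_add]; ring_nf
    have he2 : Real.exp (2 * (t * δ)) ≤ 2 := by
      have hu : 2 * (t * δ) ≤ 1 / 6 := by nlinarith
      have := hexp_le (2 * (t * δ)) (by positivity) (by linarith)
      have hmono : (1 - 2 * (t * δ))⁻¹ ≤ ((5:ℝ)/6)⁻¹ := by
        apply inv_anti₀ (by norm_num); linarith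
      calc Real.exp (2 * (t * δ)) ≤ (1 - 2 * (t * δ))⁻¹ := this
        _ ≤ ((5:ℝ)/6)⁻¹ := hmono
        _ ≤ 2 := by norm_num
    rw [hsplit, hexpγδ]
    have hq0 : 0 ≤ p / (64 * (C + 1)) := by positivity
    have step1 : C * (Real.exp (2 * (t * δ)) * (p / (64 * (C + 1)))) ≤
        C * (2 * (p / (64 * (C + 1)))) := by
      apply mul_le_mul_of_nonneg_left _ (by linarith)
      exact mul_le_mul_of_nonneg_right he2 hq0
    have step2 : C * (2 * (p / (64 * (C + 1)))) ≤ p / 32 := by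
      rw [show C * (2 * (p / (64 * (C + 1)))) = (2 * C * p) / (64 * (C + 1)) by ring]
      rw [div_le_div_iff₀ (by positivity) (by norm_num)]
      nlinarith
    linarith
  -- assemble in ENNReal
  refine ⟨t, δ, ht0, htγ, hδpos, ?_⟩
  have hinvE : (1 - ENNReal.ofReal (Real.exp ((t - γ) * δ)))⁻¹ ≤ (ENNReal.ofReal (1/2))⁻¹ := by
    apply ENNReal.inv_le_inv'
    have : ENNReal.ofReal ((1:ℝ) - Real.exp ((t - γ) * δ)) =
        1 - ENNReal.ofReal (Real.exp ((t - γ) * δ)) := by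
      rw [ENNReal.ofReal_sub _ (Real.exp_pos _).le, ENNReal.ofReal_one]
    rw [← this]
    exact ENNReal.ofReal_le_ofReal (by linarith)
  calc ENNReal.ofReal (Real.exp (t * δ)) +
        ENNReal.ofReal (C * Real.exp ((2 * t - γ) * δ)) *
          (1 - ENNReal.ofReal (Real.exp ((t - γ) * δ)))⁻¹
      ≤ ENNReal.ofReal (1 + p / 4) + ENNReal.ofReal (p / 32) * (ENNReal.ofReal (1/2))⁻¹ :=
        add_le_add (ENNReal.ofReal_le_ofReal h1)
          (mul_le_mul' (ENNReal.ofReal_le_ofReal h3) hinvE)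
    _ = ENNReal.ofReal (1 + p / 4) + ENNReal.ofReal (p / 32) * ENNReal.ofReal 2 := by
        rw [← ENNReal.ofReal_inv_of_pos (by norm_num : (0:ℝ) < 1/2)]
        norm_num
    _ = ENNReal.ofReal (1 + p / 4 + p / 16) := by
        rw [← ENNReal.ofReal_mul (by positivity), ← ENNReal.ofReal_add (by linarith) (by positivity)]
        norm_num; ring_nf
    _ ≤ ENNReal.ofReal (1 + p / 2) := ENNReal.ofReal_le_ofReal (by linarith)

theorem stmt_2 {Ω : Type*} [MeasurableSpace Ω] (μ : Measure Ω) [IsProbabilityMeasure μ]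
    (R : ℕ → Ω → ℝ) (hmeas : ∀ k, Measurable (R k))
    (hindep : iIndepFun R μ)
    (hident : ∀ k, IdentDistrib (R k) (R 1) μ μ)
    (hnonneg : ∀ k ω, 0 ≤ R k ω)
    (C γ : ℝ) (hγ : 0 < γ)
    (hbd : ∀ x : ℝ, 0 ≤ x → μ {ω | x ≤ R 1 ω} ≤ ENNReal.ofReal (C * Real.exp (-γ * x)))
    (N : Ω → ℕ) (hNmeas : Measurable N) (p : ℝ) (hp : 0 < p) (hp1 : p ≤ 1)
    (hgeom : ∀ n : ℕ, 1 ≤ n → μ {ω | N ω = n} = ENNReal.ofReal (p * (1 - p) ^ (n - 1)))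
    (hNindep : IndepFun N (fun ω k => R k ω) μ) :
    ∃ C' γ' : ℝ, 0 < γ' ∧
      ∀ x : ℝ, 0 ≤ x →
        μ {ω | x ≤ ∑ k ∈ Finset.Icc 1 (N ω), R k ω} ≤ ENNReal.ofReal (C' * Real.exp (-γ' * x)) := by
  classical
  -- C ≥ 1
  have hC1 : (1:ℝ) ≤ C := by
    have h0 := hbd 0 le_rfl
    have huniv : {ω | (0:ℝ) ≤ R 1 ω} = Set.univ := Set.eq_univ_of_forall fun ω => hnonneg 1 ω
    rw [huniv, measure_univ] at h0
    have : (1:ℝ≥0∞) ≤ ENNReal.ofReal (C * 1) := by simpa using h0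
    have := ENNReal.one_le_ofReal.1 this
    linarith
  obtain ⟨t, δ, ht0, htγ, hδpos, hbound⟩ := exists_good_t C γ p hC1 hγ hp hp1
  -- MGF bound for R 1
  have hmgfL : ∫⁻ ω, ENNReal.ofReal (Real.exp (t * R 1 ω)) ∂μ ≤ ENNReal.ofReal (1 + p / 2) :=
    (lintegral_exp_tail_bound μ (R 1) (hmeas 1) (hnonneg 1) C γ (by linarith) hbd δ t hδpos ht0).trans
      hbound
  have hm1 : AEStronglyMeasurable (fun ω => Real.exp (t * R 1 ω)) μ :=
    (((hmeas 1).const_mul t).exp).aestronglyMeasurable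
  have hnn1 : (0 : Ω → ℝ) ≤ᵐ[μ] fun ω => Real.exp (t * R 1 ω) :=
    Filter.Eventually.of_forall fun ω => (Real.exp_pos _).le
  have hint1 : Integrable (fun ω => Real.exp (t * R 1 ω)) μ := by
    refine ⟨hm1, ?_⟩
    rw [hasFiniteIntegral_iff_ofReal hnn1]
    exact lt_of_le_of_lt hmgfL ENNReal.ofReal_lt_top
  have hmgf1 : mgf (R 1) μ t ≤ 1 + p / 2 := by
    have : mgf (R 1) μ t = (∫⁻ ω, ENNReal.ofReal (Real.exp (t * R 1 ω)) ∂μ).toReal := by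
      rw [mgf]
      exact integral_eq_lintegral_of_nonneg_ae hnn1 hm1
    rw [this]
    calc (∫⁻ ω, ENNReal.ofReal (Real.exp (t * R 1 ω)) ∂μ).toReal
        ≤ (ENNReal.ofReal (1 + p / 2)).toReal :=
          ENNReal.toReal_mono ENNReal.ofReal_ne_top hmgfL
      _ = 1 + p / 2 := ENNReal.toReal_ofReal (by linarith)
  -- transfer to all k
  have hidk : ∀ k, IdentDistrib (fun ω => Real.exp (t * R k ω)) (fun ω => Real.exp (t * R 1 ω)) μ μ :=
    fun k => (hident k).comp (Real.measurable_exp.comp (measurable_id.const_mul t))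
  have hintk : ∀ k, Integrable (fun ω => Real.exp (t * R k ω)) μ :=
    fun k => ((hidk k).integrable_iff).2 hint1
  have hmgfk : ∀ k, mgf (R k) μ t = mgf (R 1) μ t := fun k => (hidk k).integral_eq
  -- Chernoff per n
  have hq : (0:ℝ) ≤ 1 + p / 2 := by linarith
  have hchern : ∀ (n : ℕ) (x : ℝ),
      μ {ω | x ≤ ∑ k ∈ Finset.Icc 1 n, R k ω} ≤
        ENNReal.ofReal (Real.exp (-t * x) * (1 + p / 2) ^ n) := by
    intro n x
    have hintsum : Integrable (fun ω => Real.exp (t * (∑ k ∈ Finset.Icc 1 n, R k) ω)) μ :=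
      hindep.integrable_exp_mul_sum hmeas fun k _ => hintk k
    have hmark := measure_ge_le_exp_mul_mgf (μ := μ) (X := ∑ k ∈ Finset.Icc 1 n, R k) x ht0.le
      hintsum
    have hprod : mgf (∑ k ∈ Finset.Icc 1 n, R k) μ t ≤ (1 + p / 2) ^ n := by
      rw [hindep.mgf_sum hmeas]
      calc ∏ k ∈ Finset.Icc 1 n, mgf (R k) μ t
          ≤ ∏ k ∈ Finset.Icc 1 n, (1 + p / 2) :=
            Finset.prod_le_prod (fun k _ => mgf_nonneg) (fun k _ => (hmgfk k) ▸ hmgf1)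
        _ = (1 + p / 2) ^ n := by
            rw [Finset.prod_const, Nat.card_Icc]; norm_num
    have hset : {ω | x ≤ (∑ k ∈ Finset.Icc 1 n, R k) ω} =
        {ω | x ≤ ∑ k ∈ Finset.Icc 1 n, R k ω} := by
      ext ω; simp [Finset.sum_apply]
    rw [hset] at hmark
    have hfin : μ {ω | x ≤ ∑ k ∈ Finset.Icc 1 n, R k ω} ≠ ⊤ := measure_ne_top μ _
    rw [← ENNReal.ofReal_toReal hfin]
    apply ENNReal.ofReal_le_ofReal
    calc (μ {ω | x ≤ ∑ k ∈ Finset.Icc 1 n, R k ω}).toReal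
        ≤ Real.exp (-t * x) * mgf (∑ k ∈ Finset.Icc 1 n, R k) μ t := hmark
      _ ≤ Real.exp (-t * x) * (1 + p / 2) ^ n :=
          mul_le_mul_of_nonneg_left hprod (Real.exp_pos _).le
  -- geometric distribution facts
  have h1p0 : (0:ℝ) ≤ 1 - p := by linarith
  have hgeom' : ∀ n : ℕ, μ {ω | N ω = n + 1} =
      ENNReal.ofReal p * (ENNReal.ofReal (1 - p)) ^ n := by
    intro n
    rw [hgeom (n+1) (Nat.le_add_left 1 n)]
    simp only [Nat.add_sub_cancel]
    rw [ENNReal.ofReal_mul hp.le, ENNReal.ofReal_pow h1p0]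
  have hsum1 : (∑' n : ℕ, μ {ω | N ω = n + 1}) = 1 := by
    rw [tsum_congr hgeom', ENNReal.tsum_mul_left, ENNReal.tsum_geometric]
    have hsub : (1:ℝ≥0∞) - ENNReal.ofReal (1 - p) = ENNReal.ofReal p := by
      rw [← ENNReal.ofReal_one, ← ENNReal.ofReal_sub _ h1p0]
      norm_num
    rw [hsub]
    exact ENNReal.mul_inv_cancel (ENNReal.ofReal_pos.2 hp).ne' ENNReal.ofReal_ne_top
  have hNsets : ∀ n : ℕ, MeasurableSet {ω | N ω = n} := fun n =>
    hNmeas (measurableSet_singleton n)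
  have hNdisj : Pairwise (Function.onFun Disjoint fun n : ℕ => {ω | N ω = n}) := by
    intro m n hmn
    refine Set.disjoint_left.2 ?_
    intro ω h1 h2
    exact hmn ((h1 : N ω = m).symm.trans (h2 : N ω = n))
  have hNuniv : (⋃ n : ℕ, {ω | N ω = n}) = Set.univ :=
    Set.eq_univ_of_forall fun ω => Set.mem_iUnion.2 ⟨N ω, rfl⟩
  have hN0 : μ {ω | N ω = 0} = 0 := by
    have hpart : (∑' n : ℕ, μ {ω | N ω = n}) = 1 := by
      rw [← measure_iUnion hNdisj hNsets, hNuniv, measure_univ]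
    rw [tsum_eq_zero_add' ENNReal.summable, hsum1] at hpart
    have h01 : μ {ω | N ω = 0} + 1 = 0 + 1 := by rw [zero_add]; exact hpart
    exact WithTop.add_right_cancel ENNReal.one_ne_top h01
  -- conclusion
  refine ⟨3, t, ht0, fun x hx => ?_⟩
  have hSnsets : ∀ n : ℕ, MeasurableSet {ω | x ≤ ∑ k ∈ Finset.Icc 1 n, R k ω} := fun n =>
    measurableSet_le measurable_const (Finset.measurable_sum _ fun k _ => hmeas k)
  set A : ℕ → Set Ω := fun n => {ω | N ω = n} ∩ {ω | x ≤ ∑ k ∈ Finset.Icc 1 n, R k ω} with hA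
  have hU : {ω | x ≤ ∑ k ∈ Finset.Icc 1 (N ω), R k ω} = ⋃ n, A n := by
    ext ω
    simp only [hA, Set.mem_setOf_eq, Set.mem_iUnion, Set.mem_inter_iff]
    constructor
    · intro h; exact ⟨N ω, rfl, h⟩
    · rintro ⟨n, hn, h⟩; rw [hn]; exact h
  have hAmeas : ∀ n, MeasurableSet (A n) := fun n => (hNsets n).inter (hSnsets n)
  have hAdisj : Pairwise (Function.onFun Disjoint A) := by
    intro m n hmn
    refine Set.disjoint_left.2 ?_
    rintro ω ⟨h1, _⟩ ⟨h2, _⟩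
    exact hmn ((h1 : N ω = m).symm.trans (h2 : N ω = n))
  have hindepn : ∀ n : ℕ,
      μ (A n) = μ {ω | N ω = n} * μ {ω | x ≤ ∑ k ∈ Finset.Icc 1 n, R k ω} := by
    intro n
    have hg : Measurable fun f : ℕ → ℝ => ∑ k ∈ Finset.Icc 1 n, f k :=
      Finset.measurable_sum _ fun k _ => measurable_pi_apply k
    have hcomp := hNindep.comp measurable_id hg
    have h := (indepFun_iff_measure_inter_preimage_eq_mul.1 hcomp) {n} (Set.Ici x)
      (measurableSet_singleton n) measurableSet_Ici
    convert h using 2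
    · ext ω
      simp [hA, Set.mem_preimage, Set.mem_Ici, Function.comp]
    · congr 1
    · congr 1
  rw [hU, measure_iUnion hAdisj hAmeas, tsum_eq_zero_add' ENNReal.summable]
  have hA0 : μ (A 0) = 0 :=
    le_antisymm ((measure_mono Set.inter_subset_left).trans hN0.le) zero_le
  rw [hA0, zero_add]
  have hterm : ∀ n : ℕ, μ (A (n + 1)) ≤
      ENNReal.ofReal (p * (1 + p / 2) * Real.exp (-t * x)) *
        (ENNReal.ofReal ((1 - p) * (1 + p / 2))) ^ n := by
    intro n
    rw [hindepn (n+1), hgeom' n]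
    have e1 : (0:ℝ) ≤ p * (1 - p) ^ n := mul_nonneg hp.le (pow_nonneg h1p0 n)
    calc ENNReal.ofReal p * ENNReal.ofReal (1 - p) ^ n *
          μ {ω | x ≤ ∑ k ∈ Finset.Icc 1 (n+1), R k ω}
        ≤ ENNReal.ofReal p * ENNReal.ofReal (1 - p) ^ n *
          ENNReal.ofReal (Real.exp (-t * x) * (1 + p / 2) ^ (n+1)) :=
          mul_le_mul_right (hchern (n+1) x) _
      _ = ENNReal.ofReal (p * (1 + p / 2) * Real.exp (-t * x)) *
          (ENNReal.ofReal ((1 - p) * (1 + p / 2))) ^ n := by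
          rw [← ENNReal.ofReal_pow h1p0, ← ENNReal.ofReal_mul hp.le,
            ← ENNReal.ofReal_mul e1,
            ← ENNReal.ofReal_pow (mul_nonneg h1p0 hq),
            ← ENNReal.ofReal_mul (mul_nonneg (mul_nonneg hp.le hq) (Real.exp_pos _).le)]
          congr 1
          rw [mul_pow, pow_succ]
          ring
  calc (∑' n : ℕ, μ (A (n + 1)))
      ≤ ∑' n : ℕ, ENNReal.ofReal (p * (1 + p / 2) * Real.exp (-t * x)) *
          (ENNReal.ofReal ((1 - p) * (1 + p / 2))) ^ n := ENNReal.tsum_le_tsum hterm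
    _ = ENNReal.ofReal (p * (1 + p / 2) * Real.exp (-t * x)) *
        (1 - ENNReal.ofReal ((1 - p) * (1 + p / 2)))⁻¹ := by
        rw [ENNReal.tsum_mul_left, ENNReal.tsum_geometric]
    _ ≤ ENNReal.ofReal (p * (1 + p / 2) * Real.exp (-t * x)) * (ENNReal.ofReal (p / 2))⁻¹ := by
        apply mul_le_mul_right
        apply ENNReal.inv_le_inv'
        have heq : ENNReal.ofReal (1 - (1 - p) * (1 + p / 2)) =
            1 - ENNReal.ofReal ((1 - p) * (1 + p / 2)) := by
          rw [ENNReal.ofReal_sub _ (mul_nonneg h1p0 hq), ENNReal.ofReal_one]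
        rw [← heq]
        exact ENNReal.ofReal_le_ofReal (by nlinarith)
    _ ≤ ENNReal.ofReal (3 * Real.exp (-t * x)) := by
        have hkey : ENNReal.ofReal (p * (1 + p / 2) * Real.exp (-t * x)) ≤
            ENNReal.ofReal (3 * Real.exp (-t * x)) * ENNReal.ofReal (p / 2) := by
          rw [← ENNReal.ofReal_mul (by positivity)]
          exact ENNReal.ofReal_le_ofReal (by nlinarith [Real.exp_pos (-t * x), mul_nonneg (mul_nonneg hp.le h1p0) (Real.exp_pos (-t * x)).le])
        calc ENNReal.ofReal (p * (1 + p / 2) * Real.exp (-t * x)) * (ENNReal.ofReal (p / 2))⁻¹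
            ≤ (ENNReal.ofReal (3 * Real.exp (-t * x)) * ENNReal.ofReal (p / 2)) *
              (ENNReal.ofReal (p / 2))⁻¹ := mul_le_mul_left hkey _
          _ = ENNReal.ofReal (3 * Real.exp (-t * x)) := by
              rw [mul_assoc, ENNReal.mul_inv_cancel
                (ENNReal.ofReal_pos.2 (by linarith)).ne' ENNReal.ofReal_ne_top, mul_one]
end

section
/- Let X and T be integrable real random variables with X ≥ 1 almost surely, T > 0 almost surely, and suppose that X is integer-valued while T has a continuous (atomless) distribution. Then E[(X·E[T] − T·E[X])²] > 0. -/
open MeasureTheory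

theorem stmt_8 {Ω : Type*} [MeasurableSpace Ω] (μ : Measure Ω) [IsProbabilityMeasure μ]
    (X T : Ω → ℝ) (hXm : Measurable X) (hTm : Measurable T)
    (hXint : Integrable X μ) (hTint : Integrable T μ)
    (hX1 : ∀ᵐ ω ∂μ, 1 ≤ X ω) (hTpos : ∀ᵐ ω ∂μ, 0 < T ω)
    (hXint' : ∀ᵐ ω ∂μ, ∃ k : ℤ, X ω = k)
    (hTatomless : ∀ t : ℝ, μ {ω | T ω = t} = 0) :
    0 < ∫⁻ ω, ENNReal.ofReal ((X ω * ∫ ω', T ω' ∂μ - T ω * ∫ ω', X ω' ∂μ) ^ 2) ∂μ := by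
  set ET := ∫ ω', T ω' ∂μ with hET
  set EX := ∫ ω', X ω' ∂μ with hEX
  have hEX1 : (1 : ℝ) ≤ EX := by
    have : ∫ _ω, (1 : ℝ) ∂μ ≤ EX :=
      integral_mono_ae (integrable_const 1) hXint hX1
    simpa using this
  have hEXpos : (0 : ℝ) < EX := lt_of_lt_of_le one_pos hEX1
  by_contra h
  push_neg at h
  have h0 : ∫⁻ ω, ENNReal.ofReal ((X ω * ET - T ω * EX) ^ 2) ∂μ = 0 := le_antisymm h zero_le
  have hmeas : Measurable fun ω => ENNReal.ofReal ((X ω * ET - T ω * EX) ^ 2) := by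
    apply ENNReal.measurable_ofReal.comp
    exact ((hXm.mul_const _).sub (hTm.mul_const _)).pow_const 2
  have hae : ∀ᵐ ω ∂μ, ENNReal.ofReal ((X ω * ET - T ω * EX) ^ 2) = 0 :=
    (lintegral_eq_zero_iff hmeas).mp h0
  have hT_eq : ∀ᵐ ω ∂μ, ∃ k : ℤ, T ω = (k : ℝ) * ET / EX := by
    filter_upwards [hae, hXint'] with ω hω ⟨k, hk⟩
    refine ⟨k, ?_⟩
    have hsq : (X ω * ET - T ω * EX) ^ 2 ≤ 0 := by
      by_contra hc
      push_neg at hc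
      exact (ENNReal.ofReal_pos.mpr hc).ne' hω
    have : (X ω * ET - T ω * EX) = 0 := by
      have := le_antisymm hsq (sq_nonneg _)
      exact pow_eq_zero_iff (n := 2) (by norm_num) |>.mp this
    have hxe : X ω * ET = T ω * EX := by linarith
    rw [eq_div_iff hEXpos.ne', ← hk]
    linarith
  have hsub : μ {ω | ¬ ∃ k : ℤ, T ω = (k : ℝ) * ET / EX} = 0 := hT_eq
  have hunion : μ (⋃ k : ℤ, {ω | T ω = (k : ℝ) * ET / EX}) = 0 := by
    refine measure_iUnion_null fun k => hTatomless _
  have : μ Set.univ = 0 := by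
    have hcover : (Set.univ : Set Ω) ⊆
        {ω | ¬ ∃ k : ℤ, T ω = (k : ℝ) * ET / EX} ∪ ⋃ k : ℤ, {ω | T ω = (k : ℝ) * ET / EX} := by
      intro ω _
      by_cases hω : ∃ k : ℤ, T ω = (k : ℝ) * ET / EX
      · exact Or.inr (Set.mem_iUnion.mpr hω)
      · exact Or.inl hω
    exact measure_mono_null hcover (measure_union_null hsub hunion)
  simp [measure_univ] at this
end
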